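/- arXiv:2407.19911 — 2 statements merged into one kernel-verified Lean document; each statement's English description precedes it below -/
import Mathlib

section
/- Let (S, Act, δ) be a control system (δ : S × Act → 𝒫(S)), φ ⊆ S a safety property, and 𝒢 a partition of S. Let C* be a set of cells such that C* ⊆ {C ∈ 𝒢 | C ⊆ φ} and for every C ∈ C* there exists an action a ∈ Act such that every cell C' with C →ₐ C' satisfies C' ∈ C* (where C →ₐ C' iff ∃ s ∈ C, δ(s,a) ∩ C' ≠ ∅). Define the strategy σ(s) = {a ∈ Act | ∀ C', [s]_𝒢 →ₐ C' → C' ∈ C*} for s in X = ⋃_{C ∈ C*} C. Then: (1) σ(s) is nonempty for all s ∈ X; (2) for all s ∈ X and a ∈ σ(s), δ(s, a) ⊆ X; and (3) X ⊆ φ. -/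
/-- Soundness of a grid-induced safety strategy (Lemma 1). -/
theorem grid_safety_strategy_sound {S Act : Type*}
    (δ : S → Act → Set S) (φ : Set S)
    -- 𝒢 is a partition of S:
    (𝒢 : Set (Set S))
    (hdisj : ∀ C ∈ 𝒢, ∀ C' ∈ 𝒢, C ≠ C' → C ∩ C' = ∅)
    (hcover : ⋃₀ 𝒢 = Set.univ)
    -- cell s = [s]_𝒢, the cell containing s:
    (cell : S → Set S)
    (hcell : ∀ s : S, cell s ∈ 𝒢 ∧ s ∈ cell s)
    -- the set of cells C*:
    (Cstar : Set (Set S))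
    (hsafeCells : Cstar ⊆ {C ∈ 𝒢 | C ⊆ φ})
    (hstep : ∀ C ∈ Cstar, ∃ a : Act, ∀ C' ∈ 𝒢,
      (∃ s ∈ C, (δ s a ∩ C').Nonempty) → C' ∈ Cstar)
    -- the controllable region X and the strategy σ:
    (X : Set S) (hX : X = ⋃ C ∈ Cstar, C)
    (σ : S → Set Act)
    (hσ : ∀ s : S, σ s = {a : Act | ∀ C' ∈ 𝒢,
      (∃ s' ∈ cell s, (δ s' a ∩ C').Nonempty) → C' ∈ Cstar}) :
    (∀ s ∈ X, (σ s).Nonempty) ∧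
    (∀ s ∈ X, ∀ a ∈ σ s, δ s a ⊆ X) ∧
    X ⊆ φ := by
  -- if s is in a cell C ∈ 𝒢, then cell s = C
  have hcelleq : ∀ (s : S) (C : Set S), C ∈ 𝒢 → s ∈ C → cell s = C := by
    intro s C hC hsC
    by_contra hne
    have := hdisj (cell s) (hcell s).1 C hC hne
    have : s ∈ (cell s) ∩ C := ⟨(hcell s).2, hsC⟩
    rw [hdisj (cell s) (hcell s).1 C hC hne] at this
    exact this
  have hmemX : ∀ s ∈ X, cell s ∈ Cstar := by
    intro s hs
    rw [hX] at hs
    obtain ⟨C, hC, hsC⟩ := Set.mem_iUnion₂.1 hs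
    rwa [hcelleq s C (hsafeCells hC).1 hsC]
  refine ⟨?_, ?_, ?_⟩
  · intro s hs
    obtain ⟨a, ha⟩ := hstep (cell s) (hmemX s hs)
    exact ⟨a, by rw [hσ]; exact ha⟩
  · intro s hs a ha t ht
    rw [hσ] at ha
    have : cell t ∈ Cstar := ha (cell t) (hcell t).1 ⟨s, (hcell s).2, t, ht, (hcell t).2⟩
    rw [hX]
    exact Set.mem_iUnion₂.2 ⟨cell t, this, (hcell t).2⟩
  · intro s hs
    exact (hsafeCells (hmemX s hs)).2 (hcell s).2
end

section
/- Let (S, Act, δ_S) be a control system, f : S → T a transformation, 𝒢 a partition of T, and define the transformed successor δ_T(C, a) = f(δ_S(f⁻¹(C), a)) for cells C. Suppose C* ⊆ 𝒢 is a set of cells such that for every C ∈ C* there exists a ∈ Act with δ_T(C, a) ⊆ ⋃_{C' ∈ C*} C', and every C ∈ C* satisfies f⁻¹(C) ⊆ φ for a safety set φ ⊆ S. Define X = f⁻¹(⋃_{C ∈ C*} C) and σ(s) = {a | δ_T([f(s)]_𝒢, a) ⊆ ⋃_{C' ∈ C*} C'} for s ∈ X. Then every trajectory s₀ a₀ s₁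 a₁ … with s₀ ∈ X, aᵢ ∈ σ(sᵢ), sᵢ₊₁ ∈ δ_S(sᵢ, aᵢ) remains within X, and hence within φ. -/
/-- Theorem 1 (trajectory form): every trajectory of the transformed shield
starting in X stays in X and hence in φ. -/
theorem transformed_shield_sound {S T Act : Type*}
    (δS : S → Act → Set S) (f : S → T) (φ : Set S)
    -- 𝒢 is a partition of T:
    (𝒢 : Set (Set T))
    (hdisj : ∀ C ∈ 𝒢, ∀ C' ∈ 𝒢, C ≠ C' → C ∩ C' = ∅)
    (hcover : ⋃₀ 𝒢 = Set.univ)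
    (cell : T → Set T)
    (hcell : ∀ t : T, cell t ∈ 𝒢 ∧ t ∈ cell t)
    -- transformed successor on cells: δ_T(C,a) = f(δ_S(f⁻¹(C),a)):
    (δT : Set T → Act → Set T)
    (hδT : ∀ (C : Set T) (a : Act), δT C a = f '' (⋃ s ∈ f ⁻¹' C, δS s a))
    -- the controllable cells C*:
    (Cstar : Set (Set T)) (hCstar : Cstar ⊆ 𝒢)
    (hstep : ∀ C ∈ Cstar, ∃ a : Act, δT C a ⊆ ⋃ C' ∈ Cstar, C')
    (hsafe : ∀ C ∈ Cstar, f ⁻¹' C ⊆ φ)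
    -- the controllable region X and the strategy σ:
    (X : Set S) (hX : X = f ⁻¹' (⋃ C ∈ Cstar, C))
    (σ : S → Set Act)
    (hσ : ∀ s : S, σ s = {a : Act | δT (cell (f s)) a ⊆ ⋃ C' ∈ Cstar, C'})
    -- a trajectory s₀ a₀ s₁ a₁ …:
    (s : ℕ → S) (a : ℕ → Act)
    (h0 : s 0 ∈ X)
    (ha : ∀ n, a n ∈ σ (s n))
    (hs : ∀ n, s (n + 1) ∈ δS (s n) (a n)) :
    ∀ n, s n ∈ X ∧ s n ∈ φ := by
  -- X membership implies φ membership
  have hXφ : ∀ x ∈ X, x ∈ φ := by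
    intro x hx
    rw [hX] at hx
    simp only [Set.mem_preimage, Set.mem_iUnion] at hx
    obtain ⟨C, hC, hfx⟩ := hx
    exact hsafe C hC hfx
  -- invariance of X
  have hinv : ∀ n, s n ∈ X := by
    intro n
    induction n with
    | zero => exact h0
    | succ n ih =>
      rw [hX] at ih ⊢
      simp only [Set.mem_preimage, Set.mem_iUnion] at ih
      obtain ⟨C, hC, hfx⟩ := ih
      -- cell (f (s n)) = C
      have hceq : cell (f (s n)) = C := by
        obtain ⟨hmem, hin⟩ := hcell (f (s n))
        by_contra hne
        have := hdisj _ hmem _ (hCstar hC) hne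
        exact absurd (Set.mem_inter hin hfx) (by rw [this]; exact not_false_iff.mpr trivial)
      have haσ := ha n
      rw [hσ, hceq] at haσ
      simp only [Set.mem_setOf_eq] at haσ
      have : f (s (n + 1)) ∈ δT C (a n) := by
        rw [hδT]
        exact ⟨s (n + 1), Set.mem_biUnion hfx (hs n), rfl⟩
      have := haσ this
      simpa using this
  exact fun n => ⟨hinv n, hXφ _ (hinv n)⟩
end
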